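/- arXiv:1305.1860 — 2 statements merged into one kernel-verified Lean document; each statement's English description precedes it below -/
import Mathlib

section
/- Let n be a natural number and let L_1,…,L_n be functions from (0,∞) to (−∞,∞] such that for each j there exists t > 0 with L_j(t) < ∞, and suppose additionally that for each j the function t ↦ L_j(t)/t is nondecreasing on (0,∞). Then for every u ∈ ℝ, (L_1 + ⋯ + L_n)^{*←}(u) ≤ L_1^{*←}(u) + ⋯ + L_n^{*←}(u). -/
open Set MeasureTheory Filter

/-- Legendre–Fenchel transform `L^*(x) = sup_{t>0} [t·x − L(t)]`, with values in `[-∞,∞]`. -/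
noncomputable def LF (L : ℝ → EReal) (x : ℝ) : EReal :=
  ⨆ (t : ℝ) (_ : 0 < t), ((t * x : ℝ) : EReal) - L t

/-- Smallest generalized inverse `L^{*←}(u) = inf {x ∈ ℝ : L^*(x) ≥ u}`, with `inf ∅ = ∞`. -/
noncomputable def geInv (L : ℝ → EReal) (u : ℝ) : EReal :=
  sInf ((fun x : ℝ => (x : EReal)) '' {x : ℝ | (u : EReal) ≤ LF L x})

/-- Largest generalized inverse `L^{*⇐}(u) = inf {x ∈ ℝ : L^*(x) > u}`, with `inf ∅ = ∞`. -/
noncomputable def tgeInv (L : ℝ → EReal) (u : ℝ) : EReal :=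
  sInf ((fun x : ℝ => (x : EReal)) '' {x : ℝ | (u : EReal) < LF L x})

/-- Hölder convolution `(L_1 ⊞ ⋯ ⊞ L_n)(t) = inf { Σ_j α_j L_j(t/α_j) : α_j > 0, Σ_j α_j = 1 }`,
with `inf ∅ = ∞`. -/
noncomputable def hconv (n : ℕ) (L : Fin n → ℝ → EReal) (t : ℝ) : EReal :=
  ⨅ (α : Fin n → ℝ) (_ : (∀ j, 0 < α j) ∧ ∑ j, α j = 1),
    ∑ j, (α j : EReal) * L j (t / α j)

/-- Cramér–Chernoff function `L_X(t) = ln E e^{tX}`, with values in `(-∞,∞]`. -/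
noncomputable def cramer {Ω : Type*} [MeasurableSpace Ω] (μ : Measure Ω) (X : Ω → ℝ)
    (t : ℝ) : EReal :=
  ENNReal.log (∫⁻ ω, ENNReal.ofReal (Real.exp (t * X ω)) ∂μ)

private lemma ecoe_sum {ι : Type*} (s : Finset ι) (f : ι → ℝ) :
    ((∑ i ∈ s, f i : ℝ) : EReal) = ∑ i ∈ s, ((f i : ℝ) : EReal) :=
  map_sum (⟨⟨Real.toEReal, EReal.coe_zero⟩, EReal.coe_add⟩ : ℝ →+ EReal) f s

private lemma LF_mono (L : ℝ → EReal) : Monotone (LF L) := by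
  intro a b hab
  refine iSup_mono fun t => iSup_mono' fun ht => ⟨ht, ?_⟩
  exact EReal.sub_le_sub (EReal.coe_le_coe_iff.2 (by nlinarith)) le_rfl

private lemma le_LF (L : ℝ → EReal) {t : ℝ} (ht : 0 < t) (x : ℝ) :
    ((t * x : ℝ) : EReal) - L t ≤ LF L x :=
  le_iSup_of_le t (le_iSup_of_le ht le_rfl)

/-- Upper bound near zero from monotonicity of `L t / t`. -/
private lemma near_zero {L : ℝ → EReal} (hbot : ∀ t : ℝ, 0 < t → L t ≠ ⊥)
    (hfin : ∃ t : ℝ, 0 < t ∧ L t ≠ ⊤)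
    (hmono : ∀ s t : ℝ, 0 < s → s ≤ t → L s / (s : EReal) ≤ L t / (t : EReal)) :
    ∃ t0 : ℝ, 0 < t0 ∧ ∃ c : ℝ, ∀ t : ℝ, 0 < t → t ≤ t0 → L t ≤ ((t * c : ℝ) : EReal) := by
  obtain ⟨t0, ht0, hfin⟩ := hfin
  set d := (L t0).toReal with hd
  have hcd : L t0 = (d : EReal) := (EReal.coe_toReal hfin (hbot _ ht0)).symm
  refine ⟨t0, ht0, d / t0, fun t ht htt0 => ?_⟩
  have h1 : L t / (t : EReal) ≤ ((d / t0 : ℝ) : EReal) := by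
    have h := hmono t t0 ht htt0
    rwa [hcd, ← EReal.coe_div] at h
  have h2 := (EReal.div_le_iff_le_mul (by exact_mod_cast ht) (EReal.coe_ne_top t)).1 h1
  rwa [← EReal.coe_mul] at h2

private lemma LF_nonneg {L : ℝ → EReal}
    (h : ∃ t0 : ℝ, 0 < t0 ∧ ∃ c : ℝ, ∀ t : ℝ, 0 < t → t ≤ t0 → L t ≤ ((t * c : ℝ) : EReal))
    (x : ℝ) : (0 : EReal) ≤ LF L x := by
  obtain ⟨t0, ht0, c, hb⟩ := h
  have h0 : ((0 : ℝ) : EReal) = (0 : EReal) := rfl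
  rw [← h0]
  refine EReal.ge_of_forall_gt_iff_ge.1 (fun v hv => ?_)
  have hv0 : v < 0 := by exact_mod_cast hv
  set t : ℝ := min t0 (-v / (|x - c| + 1)) with htdef
  have habs : (0:ℝ) ≤ |x - c| := abs_nonneg _
  have ht : 0 < t := lt_min ht0 (div_pos (by linarith) (by positivity))
  have htle : t ≤ -v / (|x - c| + 1) := min_le_right _ _
  have hvt : v < t * (x - c) := by
    have h1 : t * |x - c| ≤ (-v / (|x - c| + 1)) * |x - c| :=
      mul_le_mul_of_nonneg_right htle habs
    have h2 : (-v / (|x - c| + 1)) * |x - c| < -v := by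
      rw [div_mul_eq_mul_div, div_lt_iff₀ (by positivity)]
      nlinarith
    have h3 : -(t * |x - c|) ≤ t * (x - c) := by
      nlinarith [neg_abs_le (x - c), ht.le]
    linarith
  have hLb := hb t ht (min_le_left _ _)
  have h4 : ((t * (x - c) : ℝ) : EReal) ≤ ((t * x : ℝ) : EReal) - L t := by
    have h5 : ((t * (x - c) : ℝ) : EReal) = ((t * x : ℝ) : EReal) - ((t * c : ℝ) : EReal) := by
      rw [← EReal.coe_sub]
      norm_cast
      ring
    rw [h5]
    exact EReal.sub_le_sub le_rfl hLb
  calc (v : EReal) ≤ ((t * (x - c) : ℝ) : EReal) := by exact_mod_cast hvt.le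
    _ ≤ ((t * x : ℝ) : EReal) - L t := h4
    _ ≤ LF L x := le_LF L ht x

private lemma sum_lt_top' {ι : Type*} (s : Finset ι) (a : ι → EReal)
    (h : ∀ j ∈ s, a j < ⊤) : ∑ j ∈ s, a j < ⊤ := by
  classical
  induction s using Finset.induction_on with
  | empty => simp
  | @insert k s hk ih =>
    rw [Finset.sum_insert hk]
    exact EReal.add_lt_top (h k (Finset.mem_insert_self _ _)).ne
      (ih (fun j hj => h j (Finset.mem_insert_of_mem hj))).ne

private lemma eq_bot_or_eq_coe_of_lt_top (a : EReal) :
    a < ⊤ → a = ⊥ ∨ ∃ d : ℝ, a = (d : EReal) := by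
  induction a using EReal.rec with
  | bot => exact fun _ => Or.inl rfl
  | coe d => exact fun _ => Or.inr ⟨d, rfl⟩
  | top => exact fun h => absurd h (lt_irrefl _)

private lemma exists_forall_lt_sum {ι : Type*} [DecidableEq ι] (s : Finset ι) (a : ι → EReal)
    (ha : ∀ j ∈ s, a j < ⊤) :
    ∀ c : ℝ, (∑ j ∈ s, a j) < (c : EReal) →
      ∃ x : ι → ℝ, (∀ j ∈ s, a j < ((x j : ℝ) : EReal)) ∧ ∑ j ∈ s, x j ≤ c := by
  induction s using Finset.induction_on with
  | empty =>
    intro c hc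
    refine ⟨fun _ => 0, by simp, ?_⟩
    simp only [Finset.sum_empty] at hc ⊢
    exact_mod_cast (by exact_mod_cast hc : (0:ℝ) < c).le
  | @insert k s hk ih =>
    intro c hc
    rw [Finset.sum_insert hk] at hc
    have hak : a k < ⊤ := ha k (Finset.mem_insert_self _ _)
    have has : ∀ j ∈ s, a j < ⊤ := fun j hj => ha j (Finset.mem_insert_of_mem hj)
    have hst : ∑ j ∈ s, a j < ⊤ := sum_lt_top' s a has
    have hr : ∃ r : ℝ, a k < (r : EReal) ∧ (∑ j ∈ s, a j) < ((c - r : ℝ) : EReal) := by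
      rcases eq_bot_or_eq_coe_of_lt_top _ hst with hbs | ⟨d, hd⟩
      · obtain ⟨r, hr1, _⟩ := EReal.lt_iff_exists_real_btwn.1 hak
        exact ⟨r, hr1, by rw [hbs]; exact bot_lt_iff_ne_bot.2 (EReal.coe_ne_bot _)⟩
      · rw [hd] at hc ⊢
        have hak2 : a k < ((c : EReal) - (d : EReal)) :=
          (EReal.lt_sub_iff_add_lt (Or.inl (EReal.coe_ne_bot d))
            (Or.inl (EReal.coe_ne_top d))).2 hc
        rw [← EReal.coe_sub] at hak2
        obtain ⟨r, hr1, hr2⟩ := EReal.lt_iff_exists_real_btwn.1 hak2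
        have hr2' : r < c - d := by exact_mod_cast hr2
        exact ⟨r, hr1, by exact_mod_cast (by linarith : d < c - r)⟩
    obtain ⟨r, hr1, hr2⟩ := hr
    obtain ⟨x, hx1, hx2⟩ := ih has (c - r) hr2
    refine ⟨Function.update x k r, ?_, ?_⟩
    · intro j hj
      rcases Finset.mem_insert.1 hj with rfl | hj'
      · rwa [Function.update_self]
      · rw [Function.update_of_ne (ne_of_mem_of_not_mem hj' hk) r x]
        exact hx1 j hj'
    · rw [Finset.sum_insert hk, Function.update_self,
        Finset.sum_update_of_notMem hk]
      linarith

set_option maxHeartbeats 1000000 in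
/-- Key lemma: if `u ≤ Lⱼ*(xⱼ)` for all `j` and `0 < u`, then `u ≤ (∑Lⱼ)*(∑xⱼ)`. -/
private lemma key_lemma (n : ℕ) (hn : 0 < n) (L : Fin n → ℝ → EReal)
    (hbot : ∀ j, ∀ t : ℝ, 0 < t → L j t ≠ ⊥)
    (hmono : ∀ j, ∀ s t : ℝ, 0 < s → s ≤ t → L j s / (s : EReal) ≤ L j t / (t : EReal))
    (u : ℝ) (hu : 0 < u) (x : Fin n → ℝ)
    (hx : ∀ j, (u : EReal) ≤ LF (L j) (x j)) :
    (u : EReal) ≤ LF (fun t => ∑ j, L j t) (∑ j, x j) := by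
  haveI : Nonempty (Fin n) := ⟨⟨0, hn⟩⟩
  refine EReal.ge_of_forall_gt_iff_ge.1 (fun v hvu => ?_)
  have hvu' : v < u := by exact_mod_cast hvu
  -- it suffices to treat `w := max v (u/2)`, which is positive and `< u`
  set w : ℝ := max v (u / 2) with hwdef
  have hw0 : 0 < w := lt_of_lt_of_le (by linarith) (le_max_right _ _)
  have hwu : w < u := max_lt hvu' (by linarith)
  have hvw : v ≤ w := le_max_left _ _
  suffices hws : (w : EReal) ≤ LF (fun t => ∑ j, L j t) (∑ j, x j) by
    exact le_trans (by exact_mod_cast hvw) hws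
  set δ : ℝ := (u - w) / n with hδdef
  have hn1 : (1 : ℝ) ≤ n := by exact_mod_cast hn
  have hδpos : 0 < δ := div_pos (by linarith) (by linarith)
  have hδle : δ ≤ u - w := div_le_self (by linarith) hn1
  have hwδ : w ≤ u - δ := by linarith
  -- for each j pick tⱼ with a good value
  have hstep : ∀ j, ∃ t : ℝ, 0 < t ∧ ((u - δ : ℝ) : EReal) < ((t * x j : ℝ) : EReal) - L j t := by
    intro j
    have h1 : ((u - δ : ℝ) : EReal) < LF (L j) (x j) :=
      lt_of_lt_of_le (by exact_mod_cast (by linarith : u - δ < u)) (hx j)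
    rw [LF, lt_iSup_iff] at h1
    obtain ⟨t, ht⟩ := h1
    rw [lt_iSup_iff] at ht
    obtain ⟨htpos, hlt⟩ := ht
    exact ⟨t, htpos, hlt⟩
  choose ts hts hlt using hstep
  obtain ⟨j0, -, hj0⟩ := Finset.exists_min_image Finset.univ ts Finset.univ_nonempty
  set t : ℝ := ts j0 with htdef
  have ht : 0 < t := hts j0
  -- each `L j (ts j)` is a real number
  have hfin : ∀ j, L j (ts j) ≠ ⊤ := by
    intro j h
    have := hlt j
    rw [h, EReal.sub_top] at this
    exact absurd this (not_lt_bot)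
  set ℓ : Fin n → ℝ := fun j => (L j (ts j)).toReal with hℓdef
  have hℓ : ∀ j, L j (ts j) = ((ℓ j : ℝ) : EReal) :=
    fun j => (EReal.coe_toReal (hfin j) (hbot j _ (hts j))).symm
  have hltr : ∀ j, u - δ < ts j * x j - ℓ j := by
    intro j
    have := hlt j
    rw [hℓ j, ← EReal.coe_sub, EReal.coe_lt_coe_iff] at this
    exact this
  -- bound `L j t` by monotonicity
  have hLb : ∀ j, L j t ≤ ((t * (ℓ j / ts j) : ℝ) : EReal) := by
    intro j
    have h1 : L j t / (t : EReal) ≤ ((ℓ j / ts j : ℝ) : EReal) := by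
      have h := hmono j t (ts j) ht (hj0 j (Finset.mem_univ j))
      rwa [hℓ j, ← EReal.coe_div] at h
    have h2 := (EReal.div_le_iff_le_mul (by exact_mod_cast ht) (EReal.coe_ne_top t)).1 h1
    rwa [← EReal.coe_mul] at h2
  have hfin2 : ∀ j, L j t ≠ ⊤ :=
    fun j => ne_top_of_le_ne_top (EReal.coe_ne_top _) (hLb j)
  set m : Fin n → ℝ := fun j => (L j t).toReal with hmdef
  have hm : ∀ j, L j t = ((m j : ℝ) : EReal) :=
    fun j => (EReal.coe_toReal (hfin2 j) (hbot j _ ht)).symm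
  have hmb : ∀ j, m j ≤ t * (ℓ j / ts j) := by
    intro j
    have := hLb j
    rw [hm j, EReal.coe_le_coe_iff] at this
    exact this
  -- real inequalities
  have hterm_nonneg : ∀ j, 0 ≤ t * x j - m j := by
    intro j
    have h1 := hltr j
    have h2 := hmb j
    have htsj := hts j
    have hxc : 0 < x j - ℓ j / ts j := by
      have hexp : ts j * (x j - ℓ j / ts j) = ts j * x j - ℓ j := by
        field_simp [htsj.ne']
      nlinarith [hltr j]
    have htle := hj0 j (Finset.mem_univ j)
    nlinarith [mul_nonneg ht.le hxc.le]
  have hterm_j0 : w ≤ t * x j0 - m j0 := by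
    have h1 := hltr j0
    have h2 := hmb j0
    have h3 : t * (ℓ j0 / ts j0) = ℓ j0 := by
      rw [htdef]; field_simp [(hts j0).ne']
    nlinarith
  have hsum_real : w ≤ t * (∑ j, x j) - ∑ j, m j := by
    rw [Finset.mul_sum, ← Finset.sum_sub_distrib]
    calc w ≤ t * x j0 - m j0 := hterm_j0
      _ ≤ ∑ j, (t * x j - m j) :=
        Finset.single_le_sum (fun j _ => hterm_nonneg j) (Finset.mem_univ j0)
  have hsumL : ∑ j, L j t = ((∑ j, m j : ℝ) : EReal) := by
    rw [ecoe_sum]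
    exact Finset.sum_congr rfl (fun j _ => hm j)
  calc (w : EReal) ≤ ((t * (∑ j, x j) - ∑ j, m j : ℝ) : EReal) := by exact_mod_cast hsum_real
    _ = ((t * (∑ j, x j) : ℝ) : EReal) - ((∑ j, m j : ℝ) : EReal) := EReal.coe_sub _ _
    _ = ((t * (∑ j, x j) : ℝ) : EReal) - ∑ j, L j t := by rw [hsumL]
    _ ≤ LF (fun t => ∑ j, L j t) (∑ j, x j) := le_LF (fun t => ∑ j, L j t) ht (∑ j, x j)

/-- Corollary. If moreover each `t ↦ L_j(t)/t` is nondecreasing on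
`(0,∞)`, then the generalized inverse of the transform of the pointwise sum is at most the
sum of the generalized inverses. -/
theorem geInv_sum_le_sum_geInv (n : ℕ) (hn : 0 < n) (L : Fin n → ℝ → EReal)
    (hbot : ∀ j, ∀ t : ℝ, 0 < t → L j t ≠ ⊥)
    (hfin : ∀ j, ∃ t : ℝ, 0 < t ∧ L j t ≠ ⊤)
    (hmono : ∀ j, ∀ s t : ℝ, 0 < s → s ≤ t → L j s / (s : EReal) ≤ L j t / (t : EReal)) :
    ∀ u : ℝ, geInv (fun t => ∑ j, L j t) u ≤ ∑ j, geInv (L j) u := by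
  haveI : Nonempty (Fin n) := ⟨⟨0, hn⟩⟩
  intro u
  by_cases hu : u ≤ 0
  · -- in this case the LHS is `⊥`
    -- near-zero bound for the sum
    have hnz : ∀ j, ∃ t0 : ℝ, 0 < t0 ∧ ∃ c : ℝ, ∀ t : ℝ, 0 < t → t ≤ t0 →
        L j t ≤ ((t * c : ℝ) : EReal) :=
      fun j => near_zero (hbot j) (hfin j) (hmono j)
    choose t0 ht0 c hc using hnz
    obtain ⟨j1, -, hj1⟩ := Finset.exists_min_image Finset.univ t0 Finset.univ_nonempty
    have hnzsum : ∃ s0 : ℝ, 0 < s0 ∧ ∃ d : ℝ, ∀ t : ℝ, 0 < t → t ≤ s0 →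
        (∑ j, L j t) ≤ ((t * d : ℝ) : EReal) := by
      refine ⟨t0 j1, ht0 j1, ∑ j, c j, fun t ht hts => ?_⟩
      have hb : ∀ j, L j t ≤ ((t * c j : ℝ) : EReal) :=
        fun j => hc j t ht (le_trans hts (hj1 j (Finset.mem_univ j)))
      calc ∑ j, L j t ≤ ∑ j, ((t * c j : ℝ) : EReal) := Finset.sum_le_sum (fun j _ => hb j)
        _ = ((∑ j, t * c j : ℝ) : EReal) := (ecoe_sum _ _).symm
        _ = ((t * ∑ j, c j : ℝ) : EReal) := by rw [Finset.mul_sum]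
    have hallS : ∀ x : ℝ, (u : EReal) ≤ LF (fun t => ∑ j, L j t) x := by
      intro x
      refine le_trans ?_ (LF_nonneg hnzsum x)
      exact_mod_cast hu
    have hbotLHS : geInv (fun t => ∑ j, L j t) u = ⊥ := by
      rw [(EReal.eq_bot_iff_forall_lt _)]
      intro y
      calc geInv (fun t => ∑ j, L j t) u ≤ ((y - 1 : ℝ) : EReal) :=
            sInf_le ⟨y - 1, hallS (y - 1), rfl⟩
        _ < (y : EReal) := by exact_mod_cast (by linarith : y - 1 < y)
    rw [hbotLHS]
    exact bot_le
  · push_neg at hu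
    set a : Fin n → EReal := fun j => geInv (L j) u with hadef
    have ha_top : ∀ j, a j < ⊤ := by
      intro j
      obtain ⟨tj, htj, hfj⟩ := hfin j
      set ℓj := (L j tj).toReal with hℓj
      have hLj : L j tj = ((ℓj : ℝ) : EReal) := (EReal.coe_toReal hfj (hbot j _ htj)).symm
      set x0 : ℝ := (u + ℓj) / tj with hx0
      have hmem : (u : EReal) ≤ LF (L j) x0 := by
        have h1 : ((tj * x0 : ℝ) : EReal) - L j tj = ((u : ℝ) : EReal) := by
          rw [hLj, ← EReal.coe_sub]
          norm_cast
          rw [hx0]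
          field_simp
          ring
        calc (u : EReal) = ((tj * x0 : ℝ) : EReal) - L j tj := h1.symm
          _ ≤ LF (L j) x0 := le_LF _ htj _
      calc a j ≤ ((x0 : ℝ) : EReal) := sInf_le ⟨x0, hmem, rfl⟩
        _ < ⊤ := EReal.coe_lt_top x0
    refine EReal.le_of_forall_lt_iff_le.1 (fun z hz => ?_)
    obtain ⟨x, hx1, hx2⟩ := exists_forall_lt_sum Finset.univ a (fun j _ => ha_top j) z hz
    have hx : ∀ j, (u : EReal) ≤ LF (L j) (x j) := by
      intro j
      have hlt : sInf ((fun x : ℝ => (x : EReal)) '' {y : ℝ | (u : EReal) ≤ LF (L j) y})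
          < ((x j : ℝ) : EReal) := hx1 j (Finset.mem_univ j)
      rw [sInf_lt_iff] at hlt
      obtain ⟨e, he, helt⟩ := hlt
      obtain ⟨y, hy, rfl⟩ := he
      have helt' : ((y : ℝ) : EReal) < ((x j : ℝ) : EReal) := helt
      have hyx : y ≤ x j := by exact_mod_cast helt'.le
      exact le_trans hy (LF_mono (L j) hyx)
    have hkey : (u : EReal) ≤ LF (fun t => ∑ j, L j t) (∑ j, x j) :=
      key_lemma n hn L hbot hmono u hu x hx
    have hmem : (u : EReal) ≤ LF (fun t => ∑ j, L j t) z :=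
      le_trans hkey (LF_mono _ hx2)
    exact sInf_le ⟨z, hmem, rfl⟩
end

section
/- Let X_1,…,X_n be real-valued random variables on a common probability space (not assumed independent) such that for each j there exists t > 0 with E e^{tX_j} < ∞. Then for every u ∈ ℝ, P(X_1 + ⋯ + X_n > L_{X_1}^{*←}(u) + ⋯ + L_{X_n}^{*←}(u)) ≤ e^{−u}, with the conventions that the event is the whole space if the sum of the bounds is −∞ and empty if it is ∞. -/
open Set MeasureTheory Filter
open scoped ENNReal NNReal Topology

lemma EReal.coe_fsum {ι : Type*} (s : Finset ι) (f : ι → ℝ) :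
    ((∑ i ∈ s, f i : ℝ) : EReal) = ∑ i ∈ s, (f i : EReal) :=
  map_sum (⟨⟨Real.toEReal, EReal.coe_zero⟩, EReal.coe_add⟩ : ℝ →+ EReal) f s

lemma LF_mono_s15 (L : ℝ → EReal) {x y : ℝ} (h : x ≤ y) : LF L x ≤ LF L y := by
  refine iSup₂_le fun t ht => ?_
  refine le_trans (EReal.sub_le_sub (EReal.coe_le_coe_iff.2 ?_) le_rfl)
    (le_iSup₂ (f := fun t (_ : (0:ℝ) < t) => ((t * y : ℝ) : EReal) - L t) t ht)
  exact mul_le_mul_of_nonneg_left h ht.le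

lemma prod_ofReal_exp {ι : Type*} (s : Finset ι) (g : ι → ℝ) :
    ∏ j ∈ s, ENNReal.ofReal (Real.exp (g j)) = ENNReal.ofReal (Real.exp (∑ j ∈ s, g j)) := by
  induction s using Finset.cons_induction with
  | empty => simp
  | cons j s hj ih => rw [Finset.prod_cons, Finset.sum_cons, ih, Real.exp_add,
      ENNReal.ofReal_mul (Real.exp_nonneg _)]

lemma markov_exp {Ω : Type*} [MeasurableSpace Ω] (μ : Measure Ω) {Y : Ω → ℝ}
    (hY : Measurable Y) (t c : ℝ) (ht : 0 ≤ t) :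
    ENNReal.ofReal (Real.exp (t * c)) * μ {ω | c ≤ Y ω} ≤
      ∫⁻ ω, ENNReal.ofReal (Real.exp (t * Y ω)) ∂μ := by
  have hsub : {ω | c ≤ Y ω} ⊆
      {ω | ENNReal.ofReal (Real.exp (t * c)) ≤ ENNReal.ofReal (Real.exp (t * Y ω))} := by
    intro ω hω
    exact ENNReal.ofReal_le_ofReal (Real.exp_le_exp.2 (mul_le_mul_of_nonneg_left hω ht))
  calc ENNReal.ofReal (Real.exp (t * c)) * μ {ω | c ≤ Y ω}
      ≤ ENNReal.ofReal (Real.exp (t * c)) *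
        μ {ω | ENNReal.ofReal (Real.exp (t * c)) ≤ ENNReal.ofReal (Real.exp (t * Y ω))} :=
        mul_le_mul_right (measure_mono hsub) _
    _ ≤ _ := mul_meas_ge_le_lintegral₀
        ((ENNReal.measurable_ofReal.comp (Real.measurable_exp.comp (hY.const_mul t))).aemeasurable) _

lemma le_cramer {Ω : Type*} [MeasurableSpace Ω] (μ : Measure Ω) {X : Ω → ℝ}
    (hX : Measurable X) {t : ℝ} (ht : 0 < t) (m : ℝ) :
    ((t * m : ℝ) : EReal) + ENNReal.log (μ {ω | m ≤ X ω}) ≤ cramer μ X t := by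
  have h := ENNReal.log_monotone (markov_exp μ hX t m ht.le)
  rwa [ENNReal.log_mul_add, ENNReal.log_ofReal_of_pos (Real.exp_pos _), Real.log_exp] at h

lemma le_exp_of_forall_eps {a : ℝ≥0∞} {u : ℝ}
    (h : ∀ ε : ℝ, 0 < ε → a ≤ ENNReal.ofReal (Real.exp (ε - u))) :
    a ≤ ENNReal.ofReal (Real.exp (-u)) := by
  have hc : Continuous fun ε : ℝ => ENNReal.ofReal (Real.exp (ε - u)) :=
    ENNReal.continuous_ofReal.comp (Real.continuous_exp.comp (continuous_id.sub continuous_const))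
  have hcont : Tendsto (fun ε : ℝ => ENNReal.ofReal (Real.exp (ε - u))) (𝓝[>] (0:ℝ))
      (𝓝 (ENNReal.ofReal (Real.exp (-u)))) := by
    have := hc.tendsto 0
    simp only [zero_sub] at this
    exact this.mono_left nhdsWithin_le_nhds
  exact ge_of_tendsto hcont (by filter_upwards [self_mem_nhdsWithin] with ε hε using h ε hε)

lemma exists_coe_le_geInv {Ω : Type*} [MeasurableSpace Ω] (μ : Measure Ω)
    [IsProbabilityMeasure μ] {X : Ω → ℝ} (hX : Measurable X) {u : ℝ} (hu : 0 < u) :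
    ∃ m : ℝ, (m : EReal) ≤ geInv (cramer μ X) u := by
  obtain ⟨k, hk⟩ : ∃ k : ℕ, ENNReal.ofReal (Real.exp (-u)) < μ {ω | -(k:ℝ) ≤ X ω} := by
    have hmono : Monotone (fun k : ℕ => {ω | -(k:ℝ) ≤ X ω}) := by
      intro a b hab ω hω
      have hcast : (a:ℝ) ≤ (b:ℝ) := Nat.cast_le.2 hab
      exact le_trans (neg_le_neg hcast) hω
    have hun : ⋃ k : ℕ, {ω | -(k:ℝ) ≤ X ω} = univ := by
      ext ω
      simp only [mem_iUnion, mem_univ, iff_true, mem_setOf_eq]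
      obtain ⟨k, hk⟩ := exists_nat_ge (-X ω)
      exact ⟨k, by linarith⟩
    have ht := tendsto_measure_iUnion_atTop (μ := μ) hmono
    rw [hun, measure_univ] at ht
    have hlt : ENNReal.ofReal (Real.exp (-u)) < 1 := by
      rw [← ENNReal.ofReal_one]
      exact (ENNReal.ofReal_lt_ofReal_iff one_pos).2 (Real.exp_lt_one_iff.2 (by linarith))
    exact (ht.eventually_const_lt hlt).exists
  set m : ℝ := -(k:ℝ) with hm
  set p := μ {ω | m ≤ X ω} with hp
  have hp1 : p ≤ 1 := prob_le_one
  have hp0 : 0 < p := lt_of_le_of_lt zero_le hk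
  have hptop : p ≠ ⊤ := (lt_of_le_of_lt hp1 ENNReal.one_lt_top).ne
  set r := p.toReal with hr
  have hr0 : 0 < r := ENNReal.toReal_pos hp0.ne' hptop
  have hlogp : ENNReal.log p = ((Real.log r : ℝ) : EReal) := by
    conv_lhs => rw [← ENNReal.ofReal_toReal hptop]
    rw [ENNReal.log_ofReal_of_pos hr0]
  have hru : Real.exp (-u) < r := by
    have h2 : ENNReal.ofReal (Real.exp (-u)) < ENNReal.ofReal r := by
      rw [hr, ENNReal.ofReal_toReal hptop]; exact hk
    exact (ENNReal.ofReal_lt_ofReal_iff hr0).1 h2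
  have hv : -Real.log r < u := by
    have : -u < Real.log r := (Real.lt_log_iff_exp_lt hr0).2 hru
    linarith
  refine ⟨m, le_sInf ?_⟩
  rintro a ⟨z, hz, rfl⟩
  rw [EReal.coe_le_coe_iff]
  by_contra hxm
  push_neg at hxm
  have hLFm : LF (cramer μ X) m ≤ ((-Real.log r : ℝ) : EReal) := by
    refine iSup₂_le fun t ht => ?_
    have h1 := le_cramer μ hX ht m
    rw [hlogp, ← EReal.coe_add] at h1
    calc ((t*m:ℝ):EReal) - cramer μ X t ≤ ((t*m:ℝ):EReal) - ((t*m + Real.log r:ℝ):EReal) :=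
          EReal.sub_le_sub le_rfl h1
      _ = ((-Real.log r : ℝ):EReal) := by
          rw [← EReal.coe_sub]; norm_num
  have h3 : (u : EReal) ≤ ((-Real.log r : ℝ) : EReal) :=
    le_trans hz (le_trans (LF_mono_s15 _ hxm.le) hLFm)
  rw [EReal.coe_le_coe_iff] at h3
  linarith

lemma chernoff_step {Ω : Type*} [MeasurableSpace Ω] (μ : Measure Ω) [IsProbabilityMeasure μ]
    (n : ℕ) (hn : 0 < n) (X : Fin n → Ω → ℝ) (hX : ∀ j, Measurable (X j))
    (u ε : ℝ) (hε : 0 < ε) (x : Fin n → ℝ)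
    (hx : ∀ j, geInv (cramer μ (X j)) u = ((x j : ℝ) : EReal))
    {c : ℝ} (hc : ∑ j, x j < c) :
    μ {ω | c ≤ ∑ j, X j ω} ≤ ENNReal.ofReal (Real.exp (ε - u)) := by
  haveI : Nonempty (Fin n) := Fin.pos_iff_nonempty.1 hn
  set d := (c - ∑ j, x j) / n with hd
  have hn0 : (0:ℝ) < n := Nat.cast_pos.2 hn
  have hd0 : 0 < d := div_pos (by linarith) hn0
  have hy : ∀ j, ∃ yj : ℝ, (u : EReal) ≤ LF (cramer μ (X j)) yj ∧ yj < x j + d := by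
    intro j
    have h1 : geInv (cramer μ (X j)) u < ((x j + d : ℝ) : EReal) := by
      rw [hx j]; exact EReal.coe_lt_coe_iff.2 (by linarith)
    rw [geInv] at h1
    obtain ⟨a, ha, hlt⟩ := sInf_lt_iff.1 h1
    obtain ⟨yj, hy1, rfl⟩ := ha
    exact ⟨yj, hy1, EReal.coe_lt_coe_iff.1 hlt⟩
  choose y hyu hylt using hy
  have ht : ∀ j, ∃ tj : ℝ, 0 < tj ∧ cramer μ (X j) tj < ((tj * y j - (u - ε) : ℝ) : EReal) := by
    intro j
    have h1 : ((u - ε : ℝ) : EReal) < LF (cramer μ (X j)) (y j) :=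
      lt_of_lt_of_le (EReal.coe_lt_coe_iff.2 (by linarith)) (hyu j)
    rw [LF, lt_iSup_iff] at h1
    obtain ⟨tj, h1⟩ := h1
    rw [lt_iSup_iff] at h1
    obtain ⟨htj, h1⟩ := h1
    refine ⟨tj, htj, ?_⟩
    by_contra hcon
    push_neg at hcon
    have h2 := EReal.sub_le_sub (le_refl ((tj * y j : ℝ) : EReal)) hcon
    rw [← EReal.coe_sub] at h2
    have h3 : ((tj * y j : ℝ) : EReal) - cramer μ (X j) tj ≤ ((u - ε : ℝ) : EReal) := by
      refine le_trans h2 ?_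
      rw [EReal.coe_le_coe_iff]
      ring_nf
      exact le_refl _
    exact absurd (lt_of_lt_of_le h1 h3) (lt_irrefl _)
  choose t ht0 htc using ht
  set ℓ : Fin n → ℝ := fun j => t j * y j - (u - ε) with hℓ
  have hI : ∀ j, ∫⁻ ω, ENNReal.ofReal (Real.exp (t j * X j ω)) ∂μ
      ≤ ENNReal.ofReal (Real.exp (ℓ j)) := by
    intro j
    have h2 := EReal.exp_monotone (htc j).le
    rwa [cramer, ENNReal.exp_log, EReal.exp_coe] at h2
  set T := ∑ j, (t j)⁻¹ with hT
  have hT0 : 0 < T := Finset.sum_pos (fun j _ => inv_pos.2 (ht0 j)) Finset.univ_nonempty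
  set τ := T⁻¹ with hτ
  have hτ0 : 0 < τ := inv_pos.2 hT0
  set α : Fin n → ℝ := fun j => (t j)⁻¹ / T with hα
  have hα0 : ∀ j, 0 ≤ α j := fun j => div_nonneg (inv_pos.2 (ht0 j)).le hT0.le
  have hαsum : ∑ j, α j = 1 := by
    rw [hα, ← Finset.sum_div, ← hT]; exact div_self hT0.ne'
  have hαt : ∀ j, α j * t j = τ := by
    intro j
    rw [hα, hτ, div_mul_eq_mul_div, inv_mul_cancel₀ (ht0 j).ne', one_div]
  have hmeas : ∀ j, Measurable fun ω => ENNReal.ofReal (Real.exp (t j * X j ω)) := fun j =>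
    ENNReal.measurable_ofReal.comp (Real.measurable_exp.comp ((hX j).const_mul (t j)))
  have holder := ENNReal.lintegral_prod_norm_pow_le (μ := μ) Finset.univ
      (f := fun j ω => ENNReal.ofReal (Real.exp (t j * X j ω)))
      (fun j _ => (hmeas j).aemeasurable) hαsum (fun j _ => hα0 j)
  have hrpow : ∀ (a p : ℝ), (ENNReal.ofReal (Real.exp a)) ^ p = ENNReal.ofReal (Real.exp (a * p)) := by
    intro a p
    rw [← EReal.exp_coe, ← EReal.exp_mul, ← EReal.coe_mul, EReal.exp_coe]
  have hpt : ∀ ω, ∏ j, (ENNReal.ofReal (Real.exp (t j * X j ω))) ^ α j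
      = ENNReal.ofReal (Real.exp (τ * ∑ j, X j ω)) := by
    intro ω
    rw [Finset.prod_congr rfl (fun j _ => hrpow (t j * X j ω) (α j)), prod_ofReal_exp]
    congr 1
    congr 1
    rw [Finset.mul_sum]
    refine Finset.sum_congr rfl fun j _ => ?_
    rw [← hαt j]; ring
  have hRHS : ∏ j, (∫⁻ ω, ENNReal.ofReal (Real.exp (t j * X j ω)) ∂μ) ^ α j
      ≤ ENNReal.ofReal (Real.exp (τ * ∑ j, y j - (u - ε))) := by
    calc ∏ j, (∫⁻ ω, ENNReal.ofReal (Real.exp (t j * X j ω)) ∂μ) ^ α j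
        ≤ ∏ j, (ENNReal.ofReal (Real.exp (ℓ j))) ^ α j :=
          Finset.prod_le_prod' (fun j _ => ENNReal.rpow_le_rpow (hI j) (hα0 j))
      _ = ∏ j, ENNReal.ofReal (Real.exp (ℓ j * α j)) :=
          Finset.prod_congr rfl (fun j _ => hrpow (ℓ j) (α j))
      _ = ENNReal.ofReal (Real.exp (∑ j, ℓ j * α j)) := prod_ofReal_exp _ _
      _ = ENNReal.ofReal (Real.exp (τ * ∑ j, y j - (u - ε))) := by
          congr 1
          congr 1
          have hterm : ∀ j, ℓ j * α j = τ * y j - (u - ε) * α j := by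
            intro j
            show (t j * y j - (u - ε)) * α j = τ * y j - (u - ε) * α j
            linear_combination (y j) * (hαt j)
          rw [Finset.sum_congr rfl (fun j _ => hterm j), Finset.sum_sub_distrib,
            ← Finset.mul_sum, ← Finset.mul_sum, hαsum, mul_one]
  have hS : Measurable fun ω => ∑ j, X j ω :=
    Finset.measurable_sum Finset.univ (fun j _ => hX j)
  have hmk := markov_exp μ hS τ c hτ0.le
  have hchain : ∫⁻ ω, ENNReal.ofReal (Real.exp (τ * ∑ j, X j ω)) ∂μ
      ≤ ENNReal.ofReal (Real.exp (τ * ∑ j, y j - (u - ε))) := by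
    calc ∫⁻ ω, ENNReal.ofReal (Real.exp (τ * ∑ j, X j ω)) ∂μ
        = ∫⁻ ω, ∏ j, (ENNReal.ofReal (Real.exp (t j * X j ω))) ^ α j ∂μ := by
          refine lintegral_congr fun ω => (hpt ω).symm
      _ ≤ ∏ j, (∫⁻ ω, ENNReal.ofReal (Real.exp (t j * X j ω)) ∂μ) ^ α j := holder
      _ ≤ _ := hRHS
  have final : μ {ω | c ≤ ∑ j, X j ω} ≤
      ENNReal.ofReal (Real.exp (τ * ∑ j, y j - (u - ε))) / ENNReal.ofReal (Real.exp (τ * c)) := by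
    rw [ENNReal.le_div_iff_mul_le
      (Or.inl (ne_of_gt (ENNReal.ofReal_pos.2 (Real.exp_pos _)))) (Or.inl ENNReal.ofReal_ne_top)]
    calc μ {ω | c ≤ ∑ j, X j ω} * ENNReal.ofReal (Real.exp (τ * c))
        = ENNReal.ofReal (Real.exp (τ * c)) * μ {ω | c ≤ ∑ j, X j ω} := mul_comm _ _
      _ ≤ ∫⁻ ω, ENNReal.ofReal (Real.exp (τ * ∑ j, X j ω)) ∂μ := hmk
      _ ≤ _ := hchain
  refine le_trans final ?_
  rw [← ENNReal.ofReal_div_of_pos (Real.exp_pos _), ← Real.exp_sub]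
  refine ENNReal.ofReal_le_ofReal (Real.exp_le_exp.2 ?_)
  have hyc : ∑ j, y j ≤ c := by
    have h4 : ∑ j, y j ≤ ∑ j, (x j + d) := Finset.sum_le_sum (fun j _ => (hylt j).le)
    rw [Finset.sum_add_distrib, Finset.sum_const, Finset.card_univ, Fintype.card_fin,
      nsmul_eq_mul] at h4
    have hnd : (n : ℝ) * d = c - ∑ j, x j := by
      rw [hd]; field_simp
    linarith
  nlinarith [mul_le_mul_of_nonneg_left hyc hτ0.le]

/-- Corollary: quantile bound for sums. For random variables
`X_1,…,X_n` (not assumed independent),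
`P(X_1+⋯+X_n > L_{X_1}^{*←}(u)+⋯+L_{X_n}^{*←}(u)) ≤ e^{-u}` for all real `u`. -/
theorem prob_sum_gt_sum_geInv_le (Ω : Type*) [MeasurableSpace Ω] (μ : Measure Ω)
    [IsProbabilityMeasure μ] (n : ℕ) (hn : 0 < n) (X : Fin n → Ω → ℝ)
    (hX : ∀ j, Measurable (X j))
    (hfin : ∀ j, ∃ t : ℝ, 0 < t ∧ ∫⁻ ω, ENNReal.ofReal (Real.exp (t * X j ω)) ∂μ ≠ ⊤)
    (u : ℝ) :
    μ {ω | (∑ j, geInv (cramer μ (X j)) u) < ((∑ j, X j ω : ℝ) : EReal)} ≤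
      ENNReal.ofReal (Real.exp (-u)) := by

  rcases le_or_gt u 0 with hu | hu
  · refine le_trans prob_le_one ?_
    rw [← ENNReal.ofReal_one]
    exact ENNReal.ofReal_le_ofReal (Real.one_le_exp (by linarith))
  · have hmex := fun j => exists_coe_le_geInv μ (hX j) hu
    choose m hm using hmex
    by_cases htop : ∀ j, geInv (cramer μ (X j)) u ≠ ⊤
    · have hnbot : ∀ j, geInv (cramer μ (X j)) u ≠ ⊥ := by
        intro j hbot
        have h1 := hm j
        rw [hbot, le_bot_iff] at h1
        exact EReal.coe_ne_bot (m j) h1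
      set x : Fin n → ℝ := fun j => (geInv (cramer μ (X j)) u).toReal with hxdef
      have hx : ∀ j, geInv (cramer μ (X j)) u = ((x j : ℝ) : EReal) := fun j =>
        (EReal.coe_toReal (htop j) (hnbot j)).symm
      have hsum : (∑ j, geInv (cramer μ (X j)) u) = ((∑ j, x j : ℝ) : EReal) := by
        rw [EReal.coe_fsum]
        exact Finset.sum_congr rfl fun j _ => hx j
      set β := ∑ j, x j with hβ
      have hmono : Monotone fun k : ℕ => {ω | β + ((k:ℝ)+1)⁻¹ ≤ ∑ j, X j ω} := by
        intro a b hab ω hω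
        have h1 : ((b:ℝ)+1)⁻¹ ≤ ((a:ℝ)+1)⁻¹ := by
          apply inv_anti₀ (by positivity)
          have : (a:ℝ) ≤ b := Nat.cast_le.2 hab
          linarith
        simp only [mem_setOf_eq] at hω ⊢
        linarith
      have hset : {ω | (∑ j, geInv (cramer μ (X j)) u) < ((∑ j, X j ω : ℝ) : EReal)}
          = ⋃ k : ℕ, {ω | β + ((k:ℝ)+1)⁻¹ ≤ ∑ j, X j ω} := by
        ext ω
        simp only [mem_setOf_eq, mem_iUnion, hsum, EReal.coe_lt_coe_iff]
        constructor
        · intro h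
          obtain ⟨k, hk⟩ := exists_nat_one_div_lt (sub_pos.2 h)
          rw [one_div] at hk
          exact ⟨k, by linarith⟩
        · rintro ⟨k, hk⟩
          have h2 : (0:ℝ) < ((k:ℝ)+1)⁻¹ := by positivity
          linarith
      rw [hset, Monotone.measure_iUnion hmono]
      refine iSup_le fun k => ?_
      refine le_exp_of_forall_eps fun ε hε => ?_
      refine chernoff_step μ n hn X hX u ε hε x hx ?_
      have h2 : (0:ℝ) < ((k:ℝ)+1)⁻¹ := by positivity
      linarith
    · push_neg at htop
      obtain ⟨j0, hj0⟩ := htop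
      have hne : (∑ j, geInv (cramer μ (X j)) u) = ⊤ := by
        rw [← Finset.add_sum_erase _ _ (Finset.mem_univ j0), hj0]
        refine EReal.top_add_of_ne_bot ?_
        intro hbot
        have hle : ((∑ j ∈ Finset.univ.erase j0, m j : ℝ) : EReal)
            ≤ ∑ j ∈ Finset.univ.erase j0, geInv (cramer μ (X j)) u := by
          rw [EReal.coe_fsum]
          exact Finset.sum_le_sum fun j _ => hm j
        rw [hbot, le_bot_iff] at hle
        exact EReal.coe_ne_bot _ hle
      have hempty : {ω | (∑ j, geInv (cramer μ (X j)) u) < ((∑ j, X j ω : ℝ) : EReal)} = ∅ := by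
        ext ω
        simp [hne]
      rw [hempty, measure_empty]
      exact zero_le
end
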